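/- Let {𝔊_w}_{w ∈ S_n} ⊆ ℤ[β][x_1,…,x_n] and {𝔊_v}_{v ∈ S_{n+1}} ⊆ ℤ[β][x_1,…,x_{n+1}] be the respective unique families of Grothendieck polynomials. Then for every w ∈ S_n: (i) under the natural inclusion ℤ[β][x_1,…,x_n] ⊆ ℤ[β][x_1,…,x_{n+1}], 𝔊_{w×1} = 𝔊_w, where w×1 ∈ S_{n+1} maps i ↦ w(i) for i ≤ n and fixes n+1; and (ii) ∂_i^{(β)} 𝔊_w = −β·𝔊_w for every i ∈ [n−1] with w(i) < w(i+1). -/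

import Mathlib

open MvPolynomial

noncomputable section

/-- The coefficient ring `ℤ[β]`. -/
abbrev Rb : Type := Polynomial ℤ

/-- The indeterminate `β`. -/
def bb : Rb := Polynomial.X

/-- The order-reversing permutation `n⋯321`, i.e. `i ↦ n+1-i` in 1-indexed notation. -/
def revPerm (n : ℕ) : Equiv.Perm (Fin n) :=
  ⟨Fin.rev, Fin.rev, fun i => Fin.rev_rev i, fun i => Fin.rev_rev i⟩

/-- `z` is a fixed-point-free involution. -/
def IsFPF {n : ℕ} (z : Equiv.Perm (Fin n)) : Prop :=
  z * z = 1 ∧ ∀ i, z i ≠ i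

/-- `x_i + x_j + β x_i x_j`. -/
def oplus {n : ℕ} (i j : Fin n) : MvPolynomial (Fin n) Rb :=
  X i + X j + C bb * (X i * X j)

/-- `IsDivDiffB i j f g` encodes `∂_i^{(β)} f = g` where `j = i+1`:
`∂_i^{(β)} f = ((1+βx_j) f - s_i((1+βx_j) f)) / (x_i - x_j)`, stated multiplicatively
(the quotient is exact, and `g` is uniquely determined since the ring is a domain). -/
def IsDivDiffB {n : ℕ} (i j : Fin n) (f g : MvPolynomial (Fin n) Rb) : Prop :=
  (X i - X j) * g =
    (1 + C bb * X j) * f - rename ⇑(Equiv.swap i j) ((1 + C bb * X j) * f)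

/-- `∏_{1 ≤ i < j ≤ n-i} (x_i + x_j + β x_i x_j)` (variables 0-indexed). -/
def spTop (n : ℕ) : MvPolynomial (Fin n) Rb :=
  ∏ p ∈ Finset.univ.filter
      (fun p : Fin n × Fin n => p.1 < p.2 ∧ (p.1 : ℕ) + (p.2 : ℕ) + 2 ≤ n),
    oplus p.1 p.2

/-- `x_1^{n-1} x_2^{n-2} ⋯ x_{n-1}^1` (variables 0-indexed). -/
def grTop (n : ℕ) : MvPolynomial (Fin n) Rb :=
  ∏ a : Fin n, X a ^ (n - 1 - (a : ℕ))

/-- The defining property of the family of symplectic Grothendieck polynomials. -/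
def IsSpFam (n : ℕ) (G : Equiv.Perm (Fin n) → MvPolynomial (Fin n) Rb) : Prop :=
  G (revPerm n) = spTop n ∧
    ∀ z : Equiv.Perm (Fin n), IsFPF z →
      ∀ i j : Fin n, (j : ℕ) = (i : ℕ) + 1 →
        z i ≠ j → z j ≠ i → z j < z i →
          IsDivDiffB i j (G z) (G (Equiv.swap i j * z * Equiv.swap i j))

/-- The defining property of the family of Grothendieck polynomials. -/
def IsGrothFam (n : ℕ) (G : Equiv.Perm (Fin n) → MvPolynomial (Fin n) Rb) : Prop :=
  G (revPerm n) = grTop n ∧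
    ∀ (w : Equiv.Perm (Fin n)) (i j : Fin n), (j : ℕ) = (i : ℕ) + 1 →
      w j < w i → IsDivDiffB i j (G w) (G (w * Equiv.swap i j))

/-- The length (number of inversions) of a permutation. -/
def invLen {n : ℕ} (w : Equiv.Perm (Fin n)) : ℕ :=
  (Finset.univ.filter (fun p : Fin n × Fin n => p.1 < p.2 ∧ w p.2 < w p.1)).card

/-- The fixed-point-free involution length `ℓ_fpf(z) = #{(i,j) : z(i) > z(j) < i < j}`. -/
def fpfLen {n : ℕ} (z : Equiv.Perm (Fin n)) : ℕ :=
  (Finset.univ.filter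
      (fun p : Fin n × Fin n => z p.2 < z p.1 ∧ z p.2 < p.1 ∧ p.1 < p.2)).card

/-- The underlying function of `Θ = (1,2)(3,4)⋯(n-1,n)`. -/
def thetaFun (n : ℕ) (hn : n % 2 = 0) (i : Fin n) : Fin n :=
  ⟨if (i : ℕ) % 2 = 0 then (i : ℕ) + 1 else (i : ℕ) - 1, by
    have hi := i.isLt
    split_ifs with h <;> omega⟩

/-- The fixed-point-free involution `Θ = (1,2)(3,4)⋯(n-1,n)`. -/
def theta (n : ℕ) (hn : n % 2 = 0) : Equiv.Perm (Fin n) :=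
  Function.Involutive.toPerm (thetaFun n hn) (by
    intro i
    have hi := i.isLt
    apply Fin.ext
    simp only [thetaFun]
    split_ifs <;> omega)

/-- One step of the partial Hecke action: `heckeStep a z = some (z · s_{a+1})` when defined,
with `a` a 0-indexed letter (so `a` corresponds to the simple transposition of `a+1, a+2`
in 1-indexed notation). -/
def heckeStep {n : ℕ} (a : ℕ) (z : Equiv.Perm (Fin n)) : Option (Equiv.Perm (Fin n)) :=
  if h : a + 1 < n then
    let i : Fin n := ⟨a, Nat.lt_of_succ_lt h⟩
    let j : Fin n := ⟨a + 1, h⟩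
    if z i < z j then some (Equiv.swap i j * z * Equiv.swap i j)
    else if z i = j ∧ z j = i then none
    else if z i ≠ j ∧ z j ≠ i ∧ z j < z i then some z
    else none
  else none

/-- Apply a word of (0-indexed) letters to `z` via the partial Hecke action. -/
def heckeApply {n : ℕ} (l : List ℕ) (z : Equiv.Perm (Fin n)) :
    Option (Equiv.Perm (Fin n)) :=
  l.foldl (fun o a => o.bind (heckeStep a)) (some z)

/-- The simple transposition corresponding to the 0-indexed letter `a`. -/
def swapAt (n : ℕ) (a : ℕ) : Equiv.Perm (Fin n) :=
  if h : a + 1 < n then Equiv.swap ⟨a, Nat.lt_of_succ_lt h⟩ ⟨a + 1, h⟩ else 1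

/-- The permutation `s_{i_1} s_{i_2} ⋯ s_{i_l}` of a word. -/
def wordToPerm (n : ℕ) (l : List ℕ) : Equiv.Perm (Fin n) := (l.map (swapAt n)).prod

/-- `l` is a reduced word for `w`. -/
def IsReducedWord (n : ℕ) (w : Equiv.Perm (Fin n)) (l : List ℕ) : Prop :=
  (∀ a ∈ l, a + 1 < n) ∧ wordToPerm n l = w ∧ l.length = invLen w

/-- The set of Hecke atoms `B_fpf(z)`. -/
def Bfpf (n : ℕ) (hn : n % 2 = 0) (z : Equiv.Perm (Fin n)) :
    Finset (Equiv.Perm (Fin n)) :=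
  @Finset.filter _
    (fun w => ∃ l : List ℕ, IsReducedWord n w l ∧ heckeApply l (theta n hn) = some z)
    (Classical.decPred _) Finset.univ

/-- `extPerm z w` is the permutation `z × w` acting on the first `m` letters by `z`
and the last `n` letters by `w`. -/
def extPerm {m n : ℕ} (z : Equiv.Perm (Fin m)) (w : Equiv.Perm (Fin n)) :
    Equiv.Perm (Fin (m + n)) :=
  finSumFinEquiv.symm.trans ((Equiv.sumCongr z w).trans finSumFinEquiv)

/-- `rank(z_{[i][j]}) = #{k ∈ [j] : z(k) ≤ i}` (1-indexed sizes `i, j`). -/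
def permRank {n : ℕ} (z : Equiv.Perm (Fin n)) (i j : ℕ) : ℕ :=
  (Finset.univ.filter (fun k : Fin n => (k : ℕ) < j ∧ ((z k : Fin n) : ℕ) < i)).card

/-- The rank of the upper-left `i × j` corner of `A` (1-indexed sizes `i, j ≤ n`). -/
def cornerRank {n : ℕ} (A : Matrix (Fin n) (Fin n) ℂ) (i j : ℕ) : ℕ :=
  Matrix.rank (Matrix.of fun (a : Fin (min i n)) (b : Fin (min j n)) =>
    A ⟨(a : ℕ), lt_of_lt_of_le a.isLt (min_le_right i n)⟩
      ⟨(b : ℕ), lt_of_lt_of_le b.isLt (min_le_right j n)⟩)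

/-- The orthogonal Rothe diagram `D^O(z) = {(i, z(j)) : z(i) > z(j) ≤ i < j}` (0-indexed). -/
def DO (n : ℕ) (z : Equiv.Perm (Fin n)) : Finset (Fin n × Fin n) :=
  Finset.image (fun p : Fin n × Fin n => (p.1, z p.2))
    (Finset.univ.filter (fun p : Fin n × Fin n => z p.2 < z p.1 ∧ z p.2 ≤ p.1 ∧ p.1 < p.2))

/-- The symplectic Rothe diagram `D^Sp(z) = {(i, z(j)) : z(i) > z(j) < i < j}` (0-indexed). -/
def DSp (n : ℕ) (z : Equiv.Perm (Fin n)) : Finset (Fin n × Fin n) :=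
  Finset.image (fun p : Fin n × Fin n => (p.1, z p.2))
    (Finset.univ.filter (fun p : Fin n × Fin n => z p.2 < z p.1 ∧ z p.2 < p.1 ∧ p.1 < p.2))

/-- The essential set `Ess(D) = {(i,j) ∈ D : (i,j+1) ∉ D and (i+1,j) ∉ D}`. -/
def Ess {n : ℕ} (D : Finset (Fin n × Fin n)) : Finset (Fin n × Fin n) :=
  D.filter (fun p =>
    (∀ q ∈ D, ¬(q.1 = p.1 ∧ (q.2 : ℕ) = (p.2 : ℕ) + 1)) ∧
    (∀ q ∈ D, ¬((q.1 : ℕ) = (p.1 : ℕ) + 1 ∧ q.2 = p.2)))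

/-- A permutation is vexillary if it avoids the pattern 2143. -/
def Vexillary {n : ℕ} (z : Equiv.Perm (Fin n)) : Prop :=
  ¬ ∃ i j k l : Fin n, i < j ∧ j < k ∧ k < l ∧ z j < z i ∧ z i < z l ∧ z l < z k

/-- The ideal of `ℤ[x_1,…,x_N]` generated by symmetric polynomials with zero constant term. -/
def ILambda (N : ℕ) : Ideal (MvPolynomial (Fin N) ℤ) :=
  Ideal.span {f : MvPolynomial (Fin N) ℤ |
    (∀ σ : Equiv.Perm (Fin N), rename (⇑σ) f = f) ∧ coeff 0 f = 0}

/-- Substitute `x_j = 0` for all `j > n`, producing a polynomial in `x_1,…,x_n`. -/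
def truncVars (n N : ℕ) (f : MvPolynomial (Fin N) Rb) : MvPolynomial (Fin n) Rb :=
  aeval (fun i : Fin N => if h : (i : ℕ) < n then X ⟨(i : ℕ), h⟩ else 0) f

/-- The order used to list the elements of a pipe-dream subset `S`:
rows weakly increasing, columns strictly decreasing within a row. -/
def rowOrder {n : ℕ} (p q : Fin n × Fin n) : Prop :=
  p.1 < q.1 ∨ (p.1 = q.1 ∧ q.2 < p.2)

/-- `δ(S)` is a symplectic Hecke word for `z` (with Hecke words computed from `Θ`);
here `L` is the listing of `S` in the order `rowOrder`, and `(a,b) ∈ S` (0-indexed)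
contributes the 0-indexed letter `a + b`, i.e. the 1-indexed letter `(b+1)+(a+1)-1`. -/
def DeltaHeckeWord (n : ℕ) (hn : n % 2 = 0) (z : Equiv.Perm (Fin n))
    (S : Finset (Fin n × Fin n)) : Prop :=
  ∃ L : List (Fin n × Fin n), L.toFinset = S ∧ L.Chain' rowOrder ∧
    heckeApply (L.map (fun p => (p.1 : ℕ) + (p.2 : ℕ))) (theta n hn) = some z


section MyAux

lemma my_X_sub_X_ne {N : ℕ} {i j : Fin N} (h : i ≠ j) :
    (X i - X j : MvPolynomial (Fin N) Rb) ≠ 0 :=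
  sub_ne_zero.mpr (fun hc => h (MvPolynomial.X_injective hc))

lemma isDivDiffB_unique {N : ℕ} {i j : Fin N} (h : i ≠ j) {f g₁ g₂ : MvPolynomial (Fin N) Rb}
    (h₁ : IsDivDiffB i j f g₁) (h₂ : IsDivDiffB i j f g₂) : g₁ = g₂ := by
  unfold IsDivDiffB at h₁ h₂
  exact mul_left_cancel₀ (my_X_sub_X_ne h) (h₁.trans h₂.symm)

lemma rename_swap_swap {N : ℕ} {i j : Fin N} (p : MvPolynomial (Fin N) Rb) :
    rename ⇑(Equiv.swap i j) (rename ⇑(Equiv.swap i j) p) = p := by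
  rw [rename_rename]
  have hid : (⇑(Equiv.swap i j) ∘ ⇑(Equiv.swap i j)) = id := by
    funext a; simp [Equiv.swap_apply_self]
  rw [hid, rename_id, AlgHom.id_apply]

lemma isDivDiffB_self {N : ℕ} {i j : Fin N} (hij : i ≠ j) {f g : MvPolynomial (Fin N) Rb}
    (h : IsDivDiffB i j f g) : IsDivDiffB i j g (-(C bb) * g) := by
  unfold IsDivDiffB at h ⊢
  have h2 : (X j - X i) * rename ⇑(Equiv.swap i j) g
      = rename ⇑(Equiv.swap i j) ((1 + C bb * X j) * f) - (1 + C bb * X j) * f := by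
    have h3 := congrArg (rename ⇑(Equiv.swap i j)) h
    rw [map_mul, map_sub, rename_X, rename_X, Equiv.swap_apply_left, Equiv.swap_apply_right,
      map_sub, rename_swap_swap] at h3
    exact h3
  have hsym : rename ⇑(Equiv.swap i j) g = g := by
    apply mul_left_cancel₀ (my_X_sub_X_ne hij)
    linear_combination -h2 - h
  have hr : rename ⇑(Equiv.swap i j) ((1 + C bb * X j) * g) = (1 + C bb * X i) * g := by
    rw [map_mul, map_add, map_one, map_mul, rename_C, rename_X, Equiv.swap_apply_right, hsym]
  rw [hr]
  ring

end MyAux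
section MyAux2

lemma swap_castLE {n : ℕ} (i j a : Fin n) :
    Equiv.swap (Fin.castLE (Nat.le_succ n) i) (Fin.castLE (Nat.le_succ n) j)
      (Fin.castLE (Nat.le_succ n) a) = Fin.castLE (Nat.le_succ n) (Equiv.swap i j a) := by
  simp only [Equiv.swap_apply_def, (Fin.castLE_injective (Nat.le_succ n)).eq_iff]
  split_ifs <;> rfl

lemma isDivDiffB_rename {n : ℕ} {i j : Fin n} {f g : MvPolynomial (Fin n) Rb}
    (h : IsDivDiffB i j f g) :
    IsDivDiffB (Fin.castLE (Nat.le_succ n) i) (Fin.castLE (Nat.le_succ n) j)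
      (rename (Fin.castLE (Nat.le_succ n)) f) (rename (Fin.castLE (Nat.le_succ n)) g) := by
  unfold IsDivDiffB at h ⊢
  have key : ∀ p : MvPolynomial (Fin n) Rb,
      rename ⇑(Equiv.swap (Fin.castLE (Nat.le_succ n) i) (Fin.castLE (Nat.le_succ n) j))
        (rename (Fin.castLE (Nat.le_succ n)) p)
      = rename (Fin.castLE (Nat.le_succ n)) (rename ⇑(Equiv.swap i j) p) := by
    intro p
    rw [rename_rename, rename_rename]
    rw [show (⇑(Equiv.swap (Fin.castLE (Nat.le_succ n) i) (Fin.castLE (Nat.le_succ n) j))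
        ∘ Fin.castLE (Nat.le_succ n)) = (Fin.castLE (Nat.le_succ n) ∘ ⇑(Equiv.swap i j))
      from funext fun a => swap_castLE i j a]
  have e1 : ((1 : MvPolynomial (Fin (n+1)) Rb) + C bb * X (Fin.castLE (Nat.le_succ n) j))
      * rename (Fin.castLE (Nat.le_succ n)) f
      = rename (Fin.castLE (Nat.le_succ n)) ((1 + C bb * X j) * f) := by
    simp [map_mul, map_add, map_one, rename_C, rename_X]
  have e2 : (X (Fin.castLE (Nat.le_succ n) i) - X (Fin.castLE (Nat.le_succ n) j)
      : MvPolynomial (Fin (n+1)) Rb)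
      = rename (Fin.castLE (Nat.le_succ n)) (X i - X j) := by
    simp [map_sub, rename_X]
  rw [e1, key, e2, ← map_mul, ← map_sub, h]

lemma invLen_le_rev {n : ℕ} (w : Equiv.Perm (Fin n)) : invLen w ≤ invLen (revPerm n) := by
  unfold invLen
  apply Finset.card_le_card
  intro p hp
  simp only [Finset.mem_filter, Finset.mem_univ, true_and] at hp ⊢
  refine ⟨hp.1, ?_⟩
  show Fin.rev p.2 < Fin.rev p.1
  exact Fin.rev_lt_rev.mpr hp.1

lemma swap_lt_swap {n : ℕ} {i j a b : Fin n} (hj : (j : ℕ) = (i : ℕ) + 1) (hab : a < b)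
    (hne : ¬(a = i ∧ b = j)) : Equiv.swap i j a < Equiv.swap i j b := by
  have hne' : ¬((a : ℕ) = (i : ℕ) ∧ (b : ℕ) = (j : ℕ)) := by
    intro hc; exact hne ⟨Fin.ext hc.1, Fin.ext hc.2⟩
  rw [Fin.lt_def] at hab ⊢
  simp only [Equiv.swap_apply_def]
  split_ifs <;> (try simp only [Fin.ext_iff] at *) <;> omega

lemma invLen_lt_of_ascent {n : ℕ} (w : Equiv.Perm (Fin n)) {i j : Fin n}
    (hj : (j : ℕ) = (i : ℕ) + 1) (h : w i < w j) :
    invLen w < invLen (w * Equiv.swap i j) := by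
  classical
  unfold invLen
  set s := Equiv.swap i j with hs
  set A := Finset.univ.filter (fun p : Fin n × Fin n => p.1 < p.2 ∧ w p.2 < w p.1) with hA
  set B := Finset.univ.filter
    (fun p : Fin n × Fin n => p.1 < p.2 ∧ (w * s) p.2 < (w * s) p.1) with hB
  have hmem : (i, j) ∈ B := by
    simp only [hB, Finset.mem_filter, Finset.mem_univ, true_and, Equiv.Perm.mul_apply, hs,
      Equiv.swap_apply_left, Equiv.swap_apply_right]
    exact ⟨Fin.lt_def.mpr (by omega), h⟩
  have hinj : Function.Injective (fun p : Fin n × Fin n => (s p.1, s p.2)) := by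
    intro p q hpq
    simp only [Prod.mk.injEq] at hpq
    exact Prod.ext (s.injective hpq.1) (s.injective hpq.2)
  have hsub : A.image (fun p : Fin n × Fin n => (s p.1, s p.2)) ⊆ B.erase (i, j) := by
    intro q hq
    simp only [Finset.mem_image] at hq
    obtain ⟨p, hp, rfl⟩ := hq
    simp only [hA, Finset.mem_filter, Finset.mem_univ, true_and] at hp
    have hpne : ¬(p.1 = i ∧ p.2 = j) := by
      rintro ⟨h1, h2⟩
      rw [h1, h2] at hp
      exact absurd hp.2 (not_lt.mpr (le_of_lt h))
    refine Finset.mem_erase.mpr ⟨?_, ?_⟩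
    · intro hc
      simp only [Prod.mk.injEq] at hc
      have e1 : p.1 = j := s.injective (by rw [hc.1, hs, Equiv.swap_apply_right])
      have e2 : p.2 = i := s.injective (by rw [hc.2, hs, Equiv.swap_apply_left])
      rw [e1, e2, Fin.lt_def] at hp
      omega
    · simp only [hB, Finset.mem_filter, Finset.mem_univ, true_and, Equiv.Perm.mul_apply, hs,
        Equiv.swap_apply_self]
      exact ⟨swap_lt_swap hj hp.1 hpne, hp.2⟩
  calc A.card = (A.image (fun p : Fin n × Fin n => (s p.1, s p.2))).card :=
        (Finset.card_image_of_injective A hinj).symm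
    _ ≤ (B.erase (i, j)).card := Finset.card_le_card hsub
    _ < B.card := Finset.card_erase_lt_of_mem hmem

lemma strictMono_fin_le {n : ℕ} {f : Fin n → Fin n} (hf : StrictMono f) (i : Fin n) : i ≤ f i := by
  have key : ∀ k, ∀ i : Fin n, (i : ℕ) ≤ k → (i : ℕ) ≤ ((f i : Fin n) : ℕ) := by
    intro k
    induction k with
    | zero => intro i hi; omega
    | succ k ih =>
      intro i hi
      by_cases hik : (i : ℕ) ≤ k
      · exact ih i hik
      · have hklt : k < n := by have := i.isLt; omega
        have h1 : (⟨k, hklt⟩ : Fin n) < i := by rw [Fin.lt_def]; simp only [Fin.val_mk]; omega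
        have h2 := hf h1
        have h3 := ih ⟨k, hklt⟩ (le_refl k)
        rw [Fin.lt_def] at h2
        simp only [Fin.val_mk] at h3
        omega
  exact Fin.le_def.mpr (key n i (le_of_lt i.isLt))

lemma eq_rev_of_no_ascent {n : ℕ} (w : Equiv.Perm (Fin n))
    (h : ∀ i j : Fin n, (j : ℕ) = (i : ℕ) + 1 → w j < w i) : w = revPerm n := by
  have anti : ∀ a b : Fin n, a < b → w b < w a := by
    have key : ∀ d, ∀ a b : Fin n, (b : ℕ) = (a : ℕ) + d + 1 → w b < w a := by
      intro d
      induction d with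
      | zero => intro a b hb; exact h a b (by omega)
      | succ d ih =>
        intro a b hb
        have ha1 : (a : ℕ) + 1 < n := by have := b.isLt; omega
        have h1 := ih ⟨(a : ℕ) + 1, ha1⟩ b (by simp only [Fin.val_mk]; omega)
        have h2 := h a ⟨(a : ℕ) + 1, ha1⟩ (by simp only [Fin.val_mk])
        exact h1.trans h2
    intro a b hab
    rw [Fin.lt_def] at hab
    exact key ((b : ℕ) - (a : ℕ) - 1) a b (by omega)
  set e : Equiv.Perm (Fin n) := (revPerm n).trans w with he
  have hemo : StrictMono ⇑e := by
    intro a b hab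
    exact anti _ _ (Fin.rev_lt_rev.mpr hab)
  have hsymmmono : StrictMono ⇑e.symm := by
    intro a b hab
    rcases lt_trichotomy (e.symm a) (e.symm b) with h1 | h1 | h1
    · exact h1
    · exact absurd (e.symm.injective h1) (ne_of_lt hab)
    · exfalso
      have h2 := hemo h1
      rw [Equiv.apply_symm_apply, Equiv.apply_symm_apply] at h2
      exact absurd hab (not_lt.mpr h2.le)
  have he_id : ∀ x, e x = x := by
    intro x
    have h1 := strictMono_fin_le hemo x
    have h2 := strictMono_fin_le hsymmmono (e x)
    rw [Equiv.symm_apply_apply] at h2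
    exact le_antisymm h2 h1
  apply Equiv.ext
  intro x
  have h1 := he_id (Fin.rev x)
  have h2 : e (Fin.rev x) = w x := by
    simp only [he, Equiv.trans_apply]
    show w (Fin.rev (Fin.rev x)) = w x
    rw [Fin.rev_rev]
  rw [h2] at h1
  exact h1

end MyAux2
section MyAux3

lemma fin_succ_cases {n : ℕ} (x : Fin (n + 1)) :
    (∃ a : Fin n, x = Fin.castAdd 1 a) ∨ x = Fin.last n := by
  rcases Nat.lt_or_ge (x : ℕ) n with h | h
  · exact Or.inl ⟨⟨(x : ℕ), h⟩, by ext; simp⟩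
  · refine Or.inr (by ext; simp only [Fin.val_last]; have := x.isLt; omega)

lemma castAdd_eq_castLE {n : ℕ} (a : Fin n) :
    Fin.castAdd 1 a = Fin.castLE (Nat.le_succ n) a := rfl

lemma extPerm_apply_castAdd {n : ℕ} (w : Equiv.Perm (Fin n)) (a : Fin n) :
    extPerm w (1 : Equiv.Perm (Fin 1)) (Fin.castAdd 1 a) = Fin.castAdd 1 (w a) := by
  simp [extPerm, Equiv.trans_apply, finSumFinEquiv_symm_apply_castAdd]

lemma extPerm_apply_last {n : ℕ} (w : Equiv.Perm (Fin n)) :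
    extPerm w (1 : Equiv.Perm (Fin 1)) (Fin.last n) = Fin.last n := by
  have h0 : Fin.last n = Fin.natAdd n (0 : Fin 1) := by ext; simp
  rw [h0]
  simp [extPerm, Equiv.trans_apply, finSumFinEquiv_symm_apply_natAdd]

lemma swap_castAdd {n : ℕ} (i j a : Fin n) :
    Equiv.swap (Fin.castLE (Nat.le_succ n) i) (Fin.castLE (Nat.le_succ n) j)
      (Fin.castAdd 1 a) = Fin.castAdd 1 (Equiv.swap i j a) :=
  swap_castLE i j a

lemma extPerm_mul_swap {n : ℕ} (w : Equiv.Perm (Fin n)) (i j : Fin n) :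
    extPerm (w * Equiv.swap i j) (1 : Equiv.Perm (Fin 1)) =
      extPerm w (1 : Equiv.Perm (Fin 1)) * Equiv.swap (Fin.castLE (Nat.le_succ n) i) (Fin.castLE (Nat.le_succ n) j) := by
  apply Equiv.ext
  intro x
  rcases fin_succ_cases x with ⟨a, rfl⟩ | rfl
  · rw [Equiv.Perm.mul_apply, swap_castAdd, extPerm_apply_castAdd, extPerm_apply_castAdd,
      Equiv.Perm.mul_apply]
  · rw [Equiv.Perm.mul_apply]
    have hsw : Equiv.swap (Fin.castLE (Nat.le_succ n) i) (Fin.castLE (Nat.le_succ n) j)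
        (Fin.last n) = Fin.last n := by
      apply Equiv.swap_apply_of_ne_of_ne <;>
        (intro hc; have hv := congrArg Fin.val hc;
         simp only [Fin.val_last, Fin.coe_castLE] at hv; omega)
    rw [hsw, extPerm_apply_last, extPerm_apply_last]

def chainPerm (n : ℕ) : ℕ → Equiv.Perm (Fin (n + 1))
  | 0 => revPerm (n + 1)
  | k + 1 => chainPerm n k * swapAt (n + 1) k

def chainMono (n k : ℕ) : MvPolynomial (Fin (n + 1)) Rb :=
  ∏ a : Fin (n + 1), X a ^ (if (a : ℕ) < k then n - 1 - (a : ℕ) else n - (a : ℕ))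

lemma chainPerm_apply (n : ℕ) : ∀ k, k ≤ n → ∀ i : Fin (n + 1),
    ((chainPerm n k i : Fin (n + 1)) : ℕ) =
      if (i : ℕ) < k then n - 1 - (i : ℕ) else if (i : ℕ) = k then n else n - (i : ℕ) := by
  intro k
  induction k with
  | zero =>
    intro _ i
    show ((Fin.rev i : Fin (n + 1)) : ℕ) = _
    rw [Fin.val_rev]
    have := i.isLt
    split_ifs <;> omega
  | succ k ih =>
    intro hk i
    have hk1 : k + 1 < n + 1 := by omega
    show ((chainPerm n k (swapAt (n + 1) k i) : Fin (n + 1)) : ℕ) = _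
    rw [swapAt, dif_pos hk1]
    by_cases h1 : i = ⟨k, by omega⟩
    · subst h1
      rw [Equiv.swap_apply_left, ih (by omega)]
      simp only [Fin.val_mk]
      split_ifs <;> omega
    · by_cases h2 : i = ⟨k + 1, by omega⟩
      · subst h2
        rw [Equiv.swap_apply_right, ih (by omega)]
        simp only [Fin.val_mk]
        split_ifs <;> omega
      · rw [Equiv.swap_apply_of_ne_of_ne h1 h2, ih (by omega)]
        have hv1 : (i : ℕ) ≠ k := fun hc => h1 (Fin.ext hc)
        have hv2 : (i : ℕ) ≠ k + 1 := fun hc => h2 (Fin.ext hc)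
        split_ifs <;> omega

lemma chainPerm_top (n : ℕ) :
    chainPerm n n = extPerm (revPerm n) (1 : Equiv.Perm (Fin 1)) := by
  apply Equiv.ext
  intro x
  apply Fin.ext
  rw [chainPerm_apply n n (le_refl n) x]
  rcases fin_succ_cases x with ⟨a, rfl⟩ | rfl
  · rw [extPerm_apply_castAdd]
    have h1 : ((Fin.castAdd 1 a : Fin (n + 1)) : ℕ) = (a : ℕ) := rfl
    have h2 : ((Fin.castAdd 1 (revPerm n a) : Fin (n + 1)) : ℕ) = ((revPerm n a : Fin n) : ℕ) := rfl
    rw [h1, h2]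
    show _ = ((Fin.rev a : Fin n) : ℕ)
    rw [Fin.val_rev]
    have := a.isLt
    split_ifs <;> omega
  · rw [extPerm_apply_last]
    simp only [Fin.val_last]
    split_ifs <;> omega

end MyAux3
section MyAux4

lemma rename_swap_prod_of_not_mem {N : ℕ} (i j : Fin N) (s : Finset (Fin N))
    (hi : i ∉ s) (hj : j ∉ s) (e : Fin N → ℕ) :
    rename ⇑(Equiv.swap i j) (∏ a ∈ s, (X a : MvPolynomial (Fin N) Rb) ^ e a)
      = ∏ a ∈ s, (X a : MvPolynomial (Fin N) Rb) ^ e a := by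
  rw [map_prod]
  apply Finset.prod_congr rfl
  intro a ha
  rw [map_pow, rename_X,
    Equiv.swap_apply_of_ne_of_ne (by rintro rfl; exact hi ha) (by rintro rfl; exact hj ha)]

lemma isDivDiffB_monomial {N : ℕ} {i j : Fin N} (hij : i ≠ j)
    {M : MvPolynomial (Fin N) Rb} (hM : rename ⇑(Equiv.swap i j) M = M) (c : ℕ) :
    IsDivDiffB i j (M * (X i ^ (c + 1) * X j ^ c)) (M * (X i ^ c * X j ^ c)) := by
  unfold IsDivDiffB
  have hr : rename ⇑(Equiv.swap i j) ((1 + C bb * X j) * (M * (X i ^ (c + 1) * X j ^ c)))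
      = (1 + C bb * X i) * (M * (X j ^ (c + 1) * X i ^ c)) := by
    simp only [map_mul, map_add, map_one, map_pow, rename_X, rename_C,
      Equiv.swap_apply_left, Equiv.swap_apply_right, hM]
  rw [hr]
  ring

lemma chainMono_succ_eq (n k : ℕ) (hk : k < n) :
    ∃ M : MvPolynomial (Fin (n + 1)) Rb,
      rename ⇑(Equiv.swap (⟨k, by omega⟩ : Fin (n + 1)) (⟨k + 1, by omega⟩ : Fin (n + 1))) M = M ∧
      chainMono n k = M * (X (⟨k, by omega⟩ : Fin (n + 1)) ^ (n - k - 1 + 1)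
        * X (⟨k + 1, by omega⟩ : Fin (n + 1)) ^ (n - k - 1)) ∧
      chainMono n (k + 1) = M * (X (⟨k, by omega⟩ : Fin (n + 1)) ^ (n - k - 1)
        * X (⟨k + 1, by omega⟩ : Fin (n + 1)) ^ (n - k - 1)) := by
  classical
  set i : Fin (n + 1) := ⟨k, by omega⟩ with hi
  set j : Fin (n + 1) := ⟨k + 1, by omega⟩ with hjj
  have hij : i ≠ j := by
    intro hc; have := congrArg Fin.val hc; simp [hi, hjj] at this
  have hjmem : j ∈ Finset.univ.erase i :=
    Finset.mem_erase.mpr ⟨hij.symm, Finset.mem_univ j⟩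
  refine ⟨∏ a ∈ (Finset.univ.erase i).erase j,
      (X a : MvPolynomial (Fin (n + 1)) Rb) ^ (if (a : ℕ) < k then n - 1 - (a : ℕ) else n - (a : ℕ)),
    ?_, ?_, ?_⟩
  · apply rename_swap_prod_of_not_mem
    · intro hc
      exact (Finset.mem_erase.mp (Finset.mem_of_mem_erase hc)).1 rfl
    · intro hc
      exact (Finset.mem_erase.mp hc).1 rfl
  · unfold chainMono
    rw [← Finset.mul_prod_erase Finset.univ _ (Finset.mem_univ i),
      ← Finset.mul_prod_erase (Finset.univ.erase i) _ hjmem]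
    have ei : (if ((i : Fin (n+1)) : ℕ) < k then n - 1 - ((i : Fin (n+1)) : ℕ)
        else n - ((i : Fin (n+1)) : ℕ)) = n - k - 1 + 1 := by
      simp only [hi, Fin.val_mk]; split_ifs <;> omega
    have ej : (if ((j : Fin (n+1)) : ℕ) < k then n - 1 - ((j : Fin (n+1)) : ℕ)
        else n - ((j : Fin (n+1)) : ℕ)) = n - k - 1 := by
      simp only [hjj, Fin.val_mk]; split_ifs <;> omega
    rw [ei, ej]
    ring
  · unfold chainMono
    rw [← Finset.mul_prod_erase Finset.univ _ (Finset.mem_univ i),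
      ← Finset.mul_prod_erase (Finset.univ.erase i) _ hjmem]
    have ei : (if ((i : Fin (n+1)) : ℕ) < k + 1 then n - 1 - ((i : Fin (n+1)) : ℕ)
        else n - ((i : Fin (n+1)) : ℕ)) = n - k - 1 := by
      simp only [hi, Fin.val_mk]; split_ifs <;> omega
    have ej : (if ((j : Fin (n+1)) : ℕ) < k + 1 then n - 1 - ((j : Fin (n+1)) : ℕ)
        else n - ((j : Fin (n+1)) : ℕ)) = n - k - 1 := by
      simp only [hjj, Fin.val_mk]; split_ifs <;> omega
    have hrest : ∏ a ∈ (Finset.univ.erase i).erase j,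
        (X a : MvPolynomial (Fin (n + 1)) Rb) ^ (if (a : ℕ) < k + 1 then n - 1 - (a : ℕ) else n - (a : ℕ))
        = ∏ a ∈ (Finset.univ.erase i).erase j,
        (X a : MvPolynomial (Fin (n + 1)) Rb) ^ (if (a : ℕ) < k then n - 1 - (a : ℕ) else n - (a : ℕ)) := by
      apply Finset.prod_congr rfl
      intro a ha
      have ha1 : a ≠ j := (Finset.mem_erase.mp ha).1
      have ha2 : a ≠ i := (Finset.mem_erase.mp (Finset.mem_of_mem_erase ha)).1
      have hv1 : (a : ℕ) ≠ k := fun hc => ha2 (Fin.ext (by simp [hi, hc]))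
      congr 1
      split_ifs <;> omega
    rw [ei, ej, hrest]
    ring

lemma chainMono_top (n : ℕ) :
    chainMono n n = rename (Fin.castLE (Nat.le_succ n)) (grTop n) := by
  unfold chainMono grTop
  rw [map_prod, Fin.prod_univ_castSucc]
  have hlast : (X (Fin.last n) : MvPolynomial (Fin (n + 1)) Rb)
      ^ (if ((Fin.last n : Fin (n + 1)) : ℕ) < n then n - 1 - ((Fin.last n : Fin (n+1)) : ℕ)
        else n - ((Fin.last n : Fin (n+1)) : ℕ)) = 1 := by
    simp only [Fin.val_last]
    rw [if_neg (lt_irrefl n), Nat.sub_self, pow_zero]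
  rw [hlast, mul_one]
  apply Finset.prod_congr rfl
  intro a _
  rw [map_pow, rename_X]
  have h1 : Fin.castSucc a = Fin.castLE (Nat.le_succ n) a := rfl
  rw [h1]
  congr 1
  have := a.isLt
  simp only [Fin.coe_castLE]
  split_ifs <;> omega

lemma chainMono_zero (n : ℕ) : chainMono n 0 = grTop (n + 1) := by
  unfold chainMono grTop
  apply Finset.prod_congr rfl
  intro a _
  rw [if_neg (Nat.not_lt_zero ((a : Fin (n+1)) : ℕ))]
  norm_num

lemma chain_G (n : ℕ) (G' : Equiv.Perm (Fin (n + 1)) → MvPolynomial (Fin (n + 1)) Rb)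
    (hG' : IsGrothFam (n + 1) G') : ∀ k, k ≤ n → G' (chainPerm n k) = chainMono n k := by
  intro k
  induction k with
  | zero =>
    intro _
    rw [show chainPerm n 0 = revPerm (n + 1) from rfl, hG'.1, chainMono_zero]
  | succ k ih =>
    intro hk
    set i : Fin (n + 1) := ⟨k, by omega⟩ with hi
    set j : Fin (n + 1) := ⟨k + 1, by omega⟩ with hjj
    have hij : i ≠ j := by
      intro hc; have := congrArg Fin.val hc; simp [hi, hjj] at this
    have hdesc : chainPerm n k j < chainPerm n k i := by
      rw [Fin.lt_def, chainPerm_apply n k (by omega) i, chainPerm_apply n k (by omega) j]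
      simp only [hi, hjj, Fin.val_mk]
      split_ifs <;> omega
    have hd := hG'.2 (chainPerm n k) i j rfl hdesc
    have hstep : chainPerm n (k + 1) = chainPerm n k * Equiv.swap i j := by
      show chainPerm n k * swapAt (n + 1) k = _
      rw [swapAt, dif_pos (show k + 1 < n + 1 by omega)]
    rw [ih (by omega)] at hd
    obtain ⟨M, hM, h1, h2⟩ := chainMono_succ_eq n k (by omega)
    have hd2 := isDivDiffB_monomial hij hM (n - k - 1)
    rw [← h1, ← h2] at hd2
    rw [hstep]
    exact isDivDiffB_unique hij hd hd2

end MyAux4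
theorem statement19 (n : ℕ)
    (G : Equiv.Perm (Fin n) → MvPolynomial (Fin n) Rb) (hG : IsGrothFam n G)
    (G' : Equiv.Perm (Fin (n + 1)) → MvPolynomial (Fin (n + 1)) Rb)
    (hG' : IsGrothFam (n + 1) G') (w : Equiv.Perm (Fin n)) :
    G' (extPerm w (1 : Equiv.Perm (Fin 1))) =
        rename (Fin.castLE (Nat.le_succ n)) (G w) ∧
      ∀ i j : Fin n, (j : ℕ) = (i : ℕ) + 1 → w i < w j →
        IsDivDiffB i j (G w) (-(C bb) * G w) := by
  constructor
  · -- part (i)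
    have base : G' (extPerm (revPerm n) (1 : Equiv.Perm (Fin 1))) =
        rename (Fin.castLE (Nat.le_succ n)) (G (revPerm n)) := by
      rw [← chainPerm_top, chain_G n G' hG' n (le_refl n), chainMono_top, hG.1]
    have main : ∀ k : ℕ, ∀ u : Equiv.Perm (Fin n),
        invLen (revPerm n) ≤ invLen u + k →
        G' (extPerm u (1 : Equiv.Perm (Fin 1))) = rename (Fin.castLE (Nat.le_succ n)) (G u) := by
      intro k
      induction k with
      | zero =>
        intro u hu
        have hrev : u = revPerm n := by
          apply eq_rev_of_no_ascent
          intro i j hj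
          rcases lt_trichotomy (u i) (u j) with h | h | h
          · exfalso
            have h1 := invLen_lt_of_ascent u hj h
            have h2 := invLen_le_rev (u * Equiv.swap i j)
            omega
          · exact absurd (u.injective h) (Fin.ne_of_val_ne (by omega))
          · exact h
        rw [hrev]; exact base
      | succ k ih =>
        intro u hu
        by_cases hasc : ∃ i j : Fin n, ((j : ℕ) = (i : ℕ) + 1) ∧ u i < u j
        · obtain ⟨i, j, hj, hlt⟩ := hasc
          have hij : i ≠ j := Fin.ne_of_val_ne (by omega)
          set v := u * Equiv.swap i j with hv
          have hvu : v * Equiv.swap i j = u := by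
            rw [hv, mul_assoc, Equiv.swap_mul_self, mul_one]
          have hlen := invLen_lt_of_ascent u hj hlt
          rw [← hv] at hlen
          have ihv := ih v (by omega)
          have hdesc : v j < v i := by
            simp only [hv, Equiv.Perm.mul_apply, Equiv.swap_apply_left, Equiv.swap_apply_right]
            exact hlt
          have hd := hG.2 v i j hj hdesc
          rw [hvu] at hd
          have hdr := isDivDiffB_rename hd
          have hdesc' : extPerm v (1 : Equiv.Perm (Fin 1)) (Fin.castLE (Nat.le_succ n) j) <
              extPerm v (1 : Equiv.Perm (Fin 1)) (Fin.castLE (Nat.le_succ n) i) := by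
            rw [← castAdd_eq_castLE, ← castAdd_eq_castLE, extPerm_apply_castAdd,
              extPerm_apply_castAdd]
            rw [Fin.lt_def] at hdesc ⊢
            exact hdesc
          have hd' := hG'.2 (extPerm v (1 : Equiv.Perm (Fin 1)))
            (Fin.castLE (Nat.le_succ n) i) (Fin.castLE (Nat.le_succ n) j)
            (by simp only [Fin.coe_castLE]; omega) hdesc'
          rw [← extPerm_mul_swap, hvu, ihv] at hd'
          have hij' : Fin.castLE (Nat.le_succ n) i ≠ Fin.castLE (Nat.le_succ n) j :=
            fun hc => hij (Fin.castLE_injective _ hc)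
          exact isDivDiffB_unique hij' hd' hdr
        · push_neg at hasc
          have hrev : u = revPerm n := by
            apply eq_rev_of_no_ascent
            intro i j hj
            rcases lt_trichotomy (u i) (u j) with h | h | h
            · exact absurd h (not_lt.mpr (hasc i j hj))
            · exact absurd (u.injective h) (Fin.ne_of_val_ne (by omega))
            · exact h
          rw [hrev]; exact base
    exact main (invLen (revPerm n)) w (by omega)
  · -- part (ii)
    intro i j hj hlt
    have hij : i ≠ j := Fin.ne_of_val_ne (by omega)
    set v := w * Equiv.swap i j with hv
    have hvw : v * Equiv.swap i j = w := by
      rw [hv, mul_assoc, Equiv.swap_mul_self, mul_one]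
    have hdesc : v j < v i := by
      simp only [hv, Equiv.Perm.mul_apply, Equiv.swap_apply_left, Equiv.swap_apply_right]
      exact hlt
    have hd := hG.2 v i j hj hdesc
    rw [hvw] at hd
    exact isDivDiffB_self hij hd

end
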